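/- Suppose 0 < α < 1, ε > 0, and for all z ∈ [σ^ε, κ₀σ^{2α−2−ε}] the conditional probability bound P(Z₂ > Λz/σ | Z₁ = ±z) ≤ e^{−ε₀σ^{α−2}z} holds, with Z₁ ~ N(0, v_σ) where v_σ = Θ(σ^{2α−2}). Then ∫_{σ^ε}^{κ₀σ^{2α−2−ε}} e^z P(Z₂ > Λz/σ | Z₁ = z) p_{Z₁}(z)dz + ∫_{σ^ε}^{κ₀σ^{2α−2−ε}} e^z P(Z₂ > Λz/σ | Z₁ = −z) p_{Z₁}(z)dz = O(e^{−(ε₀/2)σ^{α−2+ε}}) = o(σ^{1−α}) as σ → 0. -/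

import Mathlib

open MeasureTheory Real Filter Topology

lemma my_exp_int {b : ℝ} (hb : 0 < b) (a : ℝ) :
    ∫ x in Set.Ioi a, Real.exp (-b * x) = Real.exp (-b * a) / b := by
  have hd : ∀ x : ℝ, HasDerivAt (fun x => -Real.exp (-b * x) / b) (Real.exp (-b * x)) x := by
    intro x
    have h1 : HasDerivAt (fun y : ℝ => -b * y) (-b) x := by
      simpa using (hasDerivAt_id x).const_mul (-b)
    have h2 := (h1.exp.neg).div_const b
    exact h2.congr_deriv (by rw [div_eq_iff hb.ne']; ring)
  have h0 : Tendsto (fun x : ℝ => -Real.exp (-b * x) / b) atTop (𝓝 0) := by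
    have h1 : Tendsto (fun x : ℝ => Real.exp (-(b * x))) atTop (𝓝 0) :=
      Real.tendsto_exp_neg_atTop_nhds_zero.comp (tendsto_id.const_mul_atTop hb)
    have := (h1.neg).div_const b
    simpa [neg_mul] using this
  have h := integral_Ioi_of_hasDerivAt_of_tendsto
    (f := fun x => -Real.exp (-b * x) / b) (f' := fun x => Real.exp (-b * x)) (a := a) (m := 0)
    (hd a).continuousAt.continuousWithinAt (fun x _ => hd x) (exp_neg_integrableOn_Ioi a hb) h0
  rw [h]; ring

lemma my_rpow_tendsto {p : ℝ} (hp : p < 0) :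
    Tendsto (fun σ : ℝ => σ ^ p) (𝓝[>] (0:ℝ)) atTop := by
  have h := (tendsto_rpow_atTop (neg_pos.mpr hp)).comp tendsto_inv_nhdsGT_zero
  refine h.congr' ?_
  filter_upwards [self_mem_nhdsWithin] with σ (hσ : 0 < σ)
  simp [Function.comp, Real.inv_rpow hσ.le, ← Real.rpow_neg hσ.le]

theorem stmt_14 (α εc ε₀ κ₀ Λ : ℝ) (hα0 : 0 < α) (hα1 : α < 1)
    (hεc : 0 < εc) (hεc2 : εc < 2 - α) (hε₀ : 0 < ε₀) (hκ₀ : 0 < κ₀) (hΛ : 0 < Λ)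
    (v : ℝ → ℝ) (c₁ c₂ : ℝ) (hc₁ : 0 < c₁) (hc₂ : 0 < c₂)
    (hv : ∀ᶠ σ in 𝓝[>] (0:ℝ), c₁ * σ ^ (2*α - 2) ≤ v σ ∧ v σ ≤ c₂ * σ ^ (2*α - 2))
    (qp qm : ℝ → ℝ → ℝ)
    (hqmeas : ∀ σ, Measurable (qp σ) ∧ Measurable (qm σ))
    (hq : ∀ᶠ σ in 𝓝[>] (0:ℝ), ∀ z ∈ Set.Icc (σ ^ εc) (κ₀ * σ ^ (2*α - 2 - εc)),
      (0 ≤ qp σ z ∧ qp σ z ≤ Real.exp (-ε₀ * σ ^ (α-2) * z)) ∧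
      (0 ≤ qm σ z ∧ qm σ z ≤ Real.exp (-ε₀ * σ ^ (α-2) * z))) :
    (∃ Cb : ℝ, ∀ᶠ σ in 𝓝[>] (0:ℝ),
      (∫ z in Set.Icc (σ ^ εc) (κ₀ * σ ^ (2*α - 2 - εc)),
          Real.exp z * (qp σ z + qm σ z)
            * ((2 * π * v σ) ^ (-(1:ℝ)/2) * Real.exp (-z^2/(2 * v σ))))
        ≤ Cb * Real.exp (-(ε₀/2) * σ ^ (α - 2 + εc))) ∧
    Tendsto (fun σ =>
        (∫ z in Set.Icc (σ ^ εc) (κ₀ * σ ^ (2*α - 2 - εc)),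
          Real.exp z * (qp σ z + qm σ z)
            * ((2 * π * v σ) ^ (-(1:ℝ)/2) * Real.exp (-z^2/(2 * v σ))))
          / σ ^ (1 - α))
      (𝓝[>] (0:ℝ)) (𝓝 0) := by
  -- eventual facts
  have hcev : ∀ᶠ σ in 𝓝[>] (0:ℝ), 1 ≤ ε₀/2 * σ ^ (α - 2) :=
    ((my_rpow_tendsto (show α - 2 < 0 by linarith)).const_mul_atTop
      (half_pos hε₀)).eventually_ge_atTop 1
  have hπev : ∀ᶠ σ in 𝓝[>] (0:ℝ), 1 ≤ c₁ * σ ^ (2*α - 2) :=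
    ((my_rpow_tendsto (show 2*α - 2 < 0 by linarith)).const_mul_atTop hc₁).eventually_ge_atTop 1
  have key : ∀ᶠ σ in 𝓝[>] (0:ℝ),
      0 ≤ (∫ z in Set.Icc (σ ^ εc) (κ₀ * σ ^ (2*α - 2 - εc)),
          Real.exp z * (qp σ z + qm σ z)
            * ((2 * π * v σ) ^ (-(1:ℝ)/2) * Real.exp (-z^2/(2 * v σ)))) ∧
      (∫ z in Set.Icc (σ ^ εc) (κ₀ * σ ^ (2*α - 2 - εc)),
          Real.exp z * (qp σ z + qm σ z)
            * ((2 * π * v σ) ^ (-(1:ℝ)/2) * Real.exp (-z^2/(2 * v σ))))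
        ≤ 2 * Real.exp (-(ε₀/2) * σ ^ (α - 2 + εc)) := by
    filter_upwards [hv, hq, hcev, hπev, self_mem_nhdsWithin]
      with σ hv' hq' hc hπ1 hσ
    have hσ0 : 0 < σ := hσ
    set A : ℝ := σ ^ εc with hA
    set B : ℝ := κ₀ * σ ^ (2*α - 2 - εc) with hB
    set c : ℝ := ε₀/2 * σ ^ (α - 2) with hcdef
    set f : ℝ → ℝ := fun z => Real.exp z * (qp σ z + qm σ z)
        * ((2 * π * v σ) ^ (-(1:ℝ)/2) * Real.exp (-z^2/(2 * v σ))) with hf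
    have hA0 : 0 < A := Real.rpow_pos_of_pos hσ0 εc
    have hv0 : 0 < v σ := lt_of_lt_of_le (by positivity) hv'.1
    have hc0 : 0 < c := lt_of_lt_of_le one_pos hc
    have hπ : 1 ≤ 2 * π * v σ := by
      have h1 : 1 ≤ v σ := le_trans hπ1 hv'.1
      nlinarith [Real.pi_gt_three]
    have hg1 : ∀ z : ℝ, 0 ≤ (2 * π * v σ) ^ (-(1:ℝ)/2) * Real.exp (-z^2/(2 * v σ)) := by
      intro z
      have := Real.pi_pos
      positivity
    have hg2 : ∀ z : ℝ, (2 * π * v σ) ^ (-(1:ℝ)/2) * Real.exp (-z^2/(2 * v σ)) ≤ 1 := by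
      intro z
      have h1 : (2 * π * v σ) ^ (-(1:ℝ)/2) ≤ 1 :=
        Real.rpow_le_one_of_one_le_of_nonpos hπ (by norm_num)
      have h2 : Real.exp (-z^2/(2 * v σ)) ≤ 1 := by
        rw [Real.exp_le_one_iff]
        apply div_nonpos_of_nonpos_of_nonneg (by nlinarith [sq_nonneg z]) (by positivity)
      have h3 : (0:ℝ) ≤ (2 * π * v σ) ^ (-(1:ℝ)/2) := by
        have := Real.pi_pos; positivity
      nlinarith
    have hfnn : ∀ z ∈ Set.Icc A B, 0 ≤ f z := by
      intro z hz
      obtain ⟨⟨hqp0, _⟩, ⟨hqm0, _⟩⟩ := hq' z hz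
      have := hg1 z
      have := (Real.exp_pos z).le
      simp only [hf]
      positivity
    have hfle : ∀ z ∈ Set.Icc A B, f z ≤ 2 * Real.exp (-c * z) := by
      intro z hz
      obtain ⟨⟨hqp0, hqp1⟩, ⟨hqm0, hqm1⟩⟩ := hq' z hz
      have hz0 : 0 ≤ z := le_trans hA0.le hz.1
      have step1 : f z ≤ Real.exp z * (2 * Real.exp (-ε₀ * σ ^ (α-2) * z)) * 1 := by
        simp only [hf]
        apply mul_le_mul _ (hg2 z) (hg1 z) (by positivity)
        apply mul_le_mul_of_nonneg_left (by linarith) (Real.exp_pos z).le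
      have step2 : Real.exp z * (2 * Real.exp (-ε₀ * σ ^ (α-2) * z)) * 1
          = 2 * Real.exp (z + -ε₀ * σ ^ (α-2) * z) := by
        rw [Real.exp_add]; ring
      have step3 : Real.exp (z + -ε₀ * σ ^ (α-2) * z) ≤ Real.exp (-c * z) := by
        apply Real.exp_le_exp.mpr
        have h4 := mul_le_mul_of_nonneg_right hc hz0
        simp only [hcdef] at *
        nlinarith
      calc f z ≤ Real.exp z * (2 * Real.exp (-ε₀ * σ ^ (α-2) * z)) * 1 := step1
        _ = 2 * Real.exp (z + -ε₀ * σ ^ (α-2) * z) := step2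
        _ ≤ 2 * Real.exp (-c * z) := by linarith [step3]
    have hm : Measurable f := by
      have m1 := (hqmeas σ).1
      have m2 := (hqmeas σ).2
      simp only [hf]
      fun_prop
    have hfi : IntegrableOn f (Set.Icc A B) := by
      apply Measure.integrableOn_of_bounded (M := 2) measure_Icc_lt_top.ne
        hm.aestronglyMeasurable
      rw [ae_restrict_iff' measurableSet_Icc]
      filter_upwards with z hz
      rw [Real.norm_eq_abs, abs_of_nonneg (hfnn z hz)]
      have hz0 : 0 ≤ z := le_trans hA0.le hz.1
      have h1 : Real.exp (-c * z) ≤ 1 := by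
        rw [Real.exp_le_one_iff]; nlinarith
      linarith [hfle z hz]
    have hgc : Continuous (fun z : ℝ => 2 * Real.exp (-c * z)) := by fun_prop
    have hgi : IntegrableOn (fun z : ℝ => 2 * Real.exp (-c * z)) (Set.Ioi A) :=
      (exp_neg_integrableOn_Ioi A hc0).const_mul 2
    have hgi' : IntegrableOn (fun z : ℝ => 2 * Real.exp (-c * z)) (Set.Ici A) := by
      rwa [integrableOn_Ici_iff_integrableOn_Ioi]
    constructor
    · exact setIntegral_nonneg measurableSet_Icc hfnn
    · have s1 : (∫ z in Set.Icc A B, f z) ≤ ∫ z in Set.Icc A B, 2 * Real.exp (-c * z) :=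
        setIntegral_mono_on hfi (hgc.integrableOn_Icc) measurableSet_Icc hfle
      have s2 : (∫ z in Set.Icc A B, 2 * Real.exp (-c * z))
          ≤ ∫ z in Set.Ici A, 2 * Real.exp (-c * z) := by
        apply setIntegral_mono_set hgi'
        · filter_upwards with z; positivity
        · exact HasSubset.Subset.eventuallyLE Set.Icc_subset_Ici_self
      have s3 : (∫ z in Set.Ici A, 2 * Real.exp (-c * z))
          = 2 * (Real.exp (-c * A) / c) := by
        rw [integral_Ici_eq_integral_Ioi, MeasureTheory.integral_const_mul, my_exp_int hc0]
      have s4 : 2 * (Real.exp (-c * A) / c) ≤ 2 * Real.exp (-c * A) := by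
        have := (Real.exp_pos (-c * A)).le
        have h5 : Real.exp (-c * A) / c ≤ Real.exp (-c * A) := div_le_self this hc
        linarith
      have s5 : -c * A = -(ε₀/2) * σ ^ (α - 2 + εc) := by
        simp only [hcdef, hA]
        rw [Real.rpow_add hσ0]
        ring
      calc (∫ z in Set.Icc A B, f z) ≤ ∫ z in Set.Icc A B, 2 * Real.exp (-c * z) := s1
        _ ≤ ∫ z in Set.Ici A, 2 * Real.exp (-c * z) := s2
        _ = 2 * (Real.exp (-c * A) / c) := s3
        _ ≤ 2 * Real.exp (-c * A) := s4
        _ = 2 * Real.exp (-(ε₀/2) * σ ^ (α - 2 + εc)) := by rw [s5]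
  constructor
  · exact ⟨2, key.mono fun σ h => h.2⟩
  · -- squeeze
    have hβ : (0:ℝ) < 2 - α - εc := by linarith
    have hw : Tendsto (fun σ : ℝ => 2 * Real.exp (-(ε₀/2) * σ ^ (α - 2 + εc)) / σ ^ (1 - α))
        (𝓝[>] (0:ℝ)) (𝓝 0) := by
      have h1 := (tendsto_rpow_mul_exp_neg_mul_atTop_nhds_zero ((1-α)/(2-α-εc)) (ε₀/2)
        (half_pos hε₀)).comp (my_rpow_tendsto (show α - 2 + εc < 0 by linarith))
      have h2 := h1.const_mul (2:ℝ)
      rw [mul_zero] at h2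
      refine h2.congr' ?_
      filter_upwards [self_mem_nhdsWithin] with σ (hσ0 : 0 < σ)
      simp only [Function.comp]
      have e1 : (σ ^ (α - 2 + εc)) ^ ((1-α)/(2-α-εc)) = σ ^ (α - 1) := by
        rw [← Real.rpow_mul hσ0.le]
        congr 1
        have hne : (2 - α - εc) ≠ 0 := ne_of_gt hβ
        field_simp
        ring
      have e2 : σ ^ (α - 1) = (σ ^ (1 - α))⁻¹ := by
        rw [show α - 1 = -(1 - α) by ring, Real.rpow_neg hσ0.le]
      rw [e1, e2]
      field_simp
    refine tendsto_of_tendsto_of_tendsto_of_le_of_le' tendsto_const_nhds hw ?_ ?_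
    · filter_upwards [key, self_mem_nhdsWithin] with σ h (hσ0 : 0 < σ)
      exact div_nonneg h.1 (Real.rpow_pos_of_pos hσ0 _).le
    · filter_upwards [key, self_mem_nhdsWithin] with σ h (hσ0 : 0 < σ)
      have hp : 0 < σ ^ (1 - α) := Real.rpow_pos_of_pos hσ0 _
      exact div_le_div_of_nonneg_right h.2 hp.le
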